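/- Priority-decision inner-bound inclusion implies stability (finite-state drift version): let α ∈ ℝ^n with α_i > 0, q' ∈ ℝ^n_{≥0}, and for every priority decision d (a permutation of {1,...,n}) a payoff vector p(d) ∈ [0,1]^n. Suppose for every k ∈ {1,...,n} and every permutation d, Σ_{j=1}^{k} α_{d_j} q'_{d_j} ≤ Σ_{j=1}^{k} α_{d_j} p_{d_j}(d). Then for every x ∈ ℝ^n_{≥0} and the LDF permutation d of x (i.e., x_{d_1} ≥ x_{d_2} ≥ ... ≥ x_{d_n}), the weighted inner product satisfies Σ_i α_i x_i (q'_i − p_i(d)) ≤ 0. -/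

import Mathlib

lemma aux_abel (n : ℕ) (f g : ℕ → ℝ)
    (hf : ∀ k < n, ∑ j ∈ Finset.range (k+1), f j ≤ 0)
    (hg0 : ∀ i, 0 ≤ g i) (hmono : ∀ i j, i ≤ j → g j ≤ g i) :
    ∑ j ∈ Finset.range n, g j * f j ≤ 0 := by
  induction n generalizing g with
  | zero => simp
  | succ m ih =>
    have key : ∑ j ∈ Finset.range (m+1), g j * f j
        = (∑ j ∈ Finset.range m, (g j - g m) * f j) + g m * ∑ j ∈ Finset.range (m+1), f j := by
      have e : ∑ j ∈ Finset.range m, (g j - g m) * f j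
          = ∑ j ∈ Finset.range m, g j * f j - ∑ j ∈ Finset.range m, g m * f j := by
        rw [← Finset.sum_sub_distrib]; apply Finset.sum_congr rfl; intros; ring
      rw [Finset.sum_range_succ (f := fun j => g j * f j), e, Finset.mul_sum,
        Finset.sum_range_succ]
      ring
    rw [key]
    have h1 : ∑ j ∈ Finset.range m, (g j - g m) * f j ≤ 0 := by
      have := ih (fun j => g (min j m) - g m)
        (fun k hk => hf k (Nat.lt_succ_of_lt hk))
        (fun i => by simpa using hmono (min i m) m (min_le_right i m))
        (fun i j hij => by simp only [sub_le_sub_iff_right]; exact hmono _ _ (min_le_min hij le_rfl))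
      calc ∑ j ∈ Finset.range m, (g j - g m) * f j
          = ∑ j ∈ Finset.range m, (g (min j m) - g m) * f j := by
            apply Finset.sum_congr rfl; intro i hi
            rw [min_eq_left (le_of_lt (Finset.mem_range.mp hi))]
        _ ≤ 0 := this
    have h2 : g m * ∑ j ∈ Finset.range (m+1), f j ≤ 0 :=
      mul_nonpos_of_nonneg_of_nonpos (hg0 m) (hf m (Nat.lt_succ_self m))
    linarith

theorem ldf_drift_le_zero (n : ℕ)
    (α q' : Fin n → ℝ) (hα : ∀ i, 0 < α i) (hq' : ∀ i, 0 ≤ q' i)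
    (p : Equiv.Perm (Fin n) → Fin n → ℝ)
    (hp : ∀ d i, 0 ≤ p d i ∧ p d i ≤ 1)
    (hprefix : ∀ (d : Equiv.Perm (Fin n)) (k : Fin n),
      ∑ j ∈ Finset.Iic k, α (d j) * q' (d j) ≤ ∑ j ∈ Finset.Iic k, α (d j) * p d (d j))
    (x : Fin n → ℝ) (hx : ∀ i, 0 ≤ x i)
    (d : Equiv.Perm (Fin n)) (hd : ∀ i j : Fin n, i ≤ j → x (d j) ≤ x (d i)) :
    ∑ i, α i * x i * (q' i - p d i) ≤ 0 := by
  -- reindex by d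
  have hre : ∑ i, α i * x i * (q' i - p d i)
      = ∑ j, x (d j) * (α (d j) * (q' (d j) - p d (d j))) := by
    rw [← Equiv.sum_comp d (fun i => α i * x i * (q' i - p d i))]
    apply Finset.sum_congr rfl; intro j _; ring
  rw [hre]
  set F : ℕ → ℝ := fun j => if h : j < n then α (d ⟨j,h⟩) * (q' (d ⟨j,h⟩) - p d (d ⟨j,h⟩)) else 0 with hF
  set G : ℕ → ℝ := fun j => if h : j < n then x (d ⟨j,h⟩) else 0 with hG
  have hsum : ∑ j, x (d j) * (α (d j) * (q' (d j) - p d (d j)))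
      = ∑ j ∈ Finset.range n, G j * F j := by
    rw [Finset.sum_range fun j => G j * F j]
    apply Finset.sum_congr rfl
    intro j _
    simp [hF, hG, j.isLt]
  rw [hsum]
  apply aux_abel
  · intro k hk
    have hIic : ∑ j ∈ Finset.range (k+1), F j
        = ∑ j ∈ Finset.Iic (⟨k, hk⟩ : Fin n), α (d j) * (q' (d j) - p d (d j)) := by
      have hr : Finset.range (k+1) = Finset.Iic ((⟨k,hk⟩ : Fin n) : ℕ) := by
        ext a; simp [Nat.lt_succ_iff]
      rw [hr, ← Fin.map_valEmbedding_Iic, Finset.sum_map]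
      apply Finset.sum_congr rfl
      intro j _
      simp only [Fin.valEmbedding_apply, hF, dif_pos j.isLt]
    rw [hIic]
    have := hprefix d ⟨k, hk⟩
    have : ∑ j ∈ Finset.Iic (⟨k,hk⟩ : Fin n), α (d j) * (q' (d j) - p d (d j))
        = (∑ j ∈ Finset.Iic (⟨k,hk⟩:Fin n), α (d j) * q' (d j))
          - ∑ j ∈ Finset.Iic (⟨k,hk⟩:Fin n), α (d j) * p d (d j) := by
      rw [← Finset.sum_sub_distrib]; apply Finset.sum_congr rfl; intros; ring
    rw [this]
    linarith [hprefix d (⟨k, hk⟩ : Fin n)]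
  · intro i
    by_cases h : i < n
    · simp [hG, h, hx]
    · simp [hG, h]
  · intro i j hij
    by_cases hj : j < n
    · have hi : i < n := lt_of_le_of_lt hij hj
      simp only [hG, dif_pos hi, dif_pos hj]
      exact hd ⟨i,hi⟩ ⟨j,hj⟩ hij
    · by_cases hi : i < n <;> simp [hG, hi, hj, hx]
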